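/- For every integer t ≥ 2, the high-rate potential threshold of iterative hard-decision decoding without miscorrection satisfies ρ̂_t** ≥ 2t−2, where ρ̂_t** = sup{ρ ∈ [0,∞) : U(λ;ρ) ≥ 0 for all λ ≥ 0}. -/

import Mathlib

open Filter

/-- Poisson tail probability `φ(λ;k) = ∑_{i=k+1}^∞ (λ^i/i!)·e^{−λ}`. -/
noncomputable def phi (lam : ℝ) (k : ℕ) : ℝ :=
  ∑' i : ℕ, if k + 1 ≤ i then lam ^ i / (Nat.factorial i : ℝ) * Real.exp (-lam) else 0

/-- Potential function of the high-rate scaling limit of density evolution for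
iterative hard-decision decoding without miscorrection:
`U(λ;ρ) = ∫_0^λ (z − ρ·φ(z;t−1)) dz`. -/
noncomputable def U (t : ℕ) (lam ρ : ℝ) : ℝ :=
  ∫ z in (0 : ℝ)..lam, (z - ρ * phi z (t - 1))

/-- High-rate potential threshold of iterative hard-decision decoding without
miscorrection: `ρ̂_t** = sup{ρ ∈ [0,∞) : U(λ;ρ) ≥ 0 for all λ ≥ 0}`. -/
noncomputable def rhoHatStarStar (t : ℕ) : ℝ :=
  sSup {ρ : ℝ | 0 ≤ ρ ∧ ∀ lam : ℝ, 0 ≤ lam → 0 ≤ U t lam ρ}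

open Finset


lemma exp_tsum (x : ℝ) : ∑' n : ℕ, x ^ n / (Nat.factorial n : ℝ) = Real.exp x := by
  rw [Real.exp_eq_exp_ℝ, NormedSpace.exp_eq_tsum_div]

lemma sum_fact (x : ℝ) : Summable (fun n : ℕ => x ^ n / (Nat.factorial n : ℝ)) :=
  Real.summable_pow_div_factorial x

lemma sum1 (x : ℝ) : Summable (fun i : ℕ => (i : ℝ) * x ^ i / (Nat.factorial i : ℝ)) := by
  rw [← summable_nat_add_iff 1]
  refine ((sum_fact x).mul_left x).congr fun i => ?_
  have hi : (Nat.factorial i : ℝ) ≠ 0 := Nat.cast_ne_zero.mpr (Nat.factorial_ne_zero i)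
  rw [Nat.factorial_succ]
  push_cast
  field_simp
  ring

lemma sum2 (x : ℝ) :
    Summable (fun i : ℕ => (i : ℝ) * ((i : ℝ) - 1) * x ^ i / (Nat.factorial i : ℝ)) := by
  rw [← summable_nat_add_iff 2]
  refine ((sum_fact x).mul_left (x ^ 2)).congr fun i => ?_
  have hi : (Nat.factorial i : ℝ) ≠ 0 := Nat.cast_ne_zero.mpr (Nat.factorial_ne_zero i)
  have h2 : Nat.factorial (i + 2) = (i + 2) * ((i + 1) * Nat.factorial i) := by
    rw [Nat.factorial_succ, Nat.factorial_succ]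
  rw [h2]
  push_cast
  field_simp
  ring

lemma tsumE1 (x : ℝ) : ∑' i : ℕ, (i : ℝ) * x ^ i / (Nat.factorial i : ℝ) = x * Real.exp x := by
  rw [Summable.tsum_eq_zero_add (sum1 x)]
  have h : (fun i : ℕ => ((i + 1 : ℕ) : ℝ) * x ^ (i + 1) / (Nat.factorial (i + 1) : ℝ))
      = fun i : ℕ => x * (x ^ i / (Nat.factorial i : ℝ)) := by
    funext i
    have hi : (Nat.factorial i : ℝ) ≠ 0 := Nat.cast_ne_zero.mpr (Nat.factorial_ne_zero i)
    rw [Nat.factorial_succ]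
    push_cast
    field_simp
    ring
  simp only [h, Nat.cast_zero, zero_mul, pow_zero, zero_div, zero_add]
  rw [tsum_mul_left, exp_tsum]

lemma tsumE2 (x : ℝ) :
    ∑' i : ℕ, (i : ℝ) * ((i : ℝ) - 1) * x ^ i / (Nat.factorial i : ℝ) = x ^ 2 * Real.exp x := by
  have h0 := (Summable.sum_add_tsum_nat_add 2 (sum2 x)).symm
  rw [h0]
  have h : (fun i : ℕ => ((i + 2 : ℕ) : ℝ) * (((i + 2 : ℕ) : ℝ) - 1) * x ^ (i + 2)
      / (Nat.factorial (i + 2) : ℝ))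
      = fun i : ℕ => x ^ 2 * (x ^ i / (Nat.factorial i : ℝ)) := by
    funext i
    have hi : (Nat.factorial i : ℝ) ≠ 0 := Nat.cast_ne_zero.mpr (Nat.factorial_ne_zero i)
    have h2 : Nat.factorial (i + 2) = (i + 2) * ((i + 1) * Nat.factorial i) := by
      rw [Nat.factorial_succ, Nat.factorial_succ]
    rw [h2]
    push_cast
    field_simp
    ring
  simp only [h]
  rw [tsum_mul_left, exp_tsum]
  simp [Finset.sum_range_succ]

lemma summable_ite_of (f : ℕ → ℝ) (hf : Summable f) (k : ℕ) :
    Summable (fun i : ℕ => if k ≤ i then f i else 0) := by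
  refine Summable.of_norm_bounded hf.norm fun i => ?_
  by_cases h : k ≤ i <;> simp [h]

lemma tsum_ite_of (f : ℕ → ℝ) (hf : Summable f) (k : ℕ) :
    ∑' i : ℕ, (if k ≤ i then f i else 0) = (∑' i, f i) - ∑ i ∈ range k, f i := by
  have h1 := (Summable.sum_add_tsum_nat_add k (summable_ite_of f hf k)).symm
  have h2 := (Summable.sum_add_tsum_nat_add k hf).symm
  have e1 : ∑ i ∈ range k, (if k ≤ i then f i else 0) = 0 := by
    refine Finset.sum_eq_zero fun i hi => ?_
    exact if_neg (Nat.not_le.mpr (Finset.mem_range.mp hi))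
  have e2 : (fun i : ℕ => if k ≤ i + k then f (i + k) else 0) = fun i => f (i + k) := by
    funext i; rw [if_pos (by omega)]
  rw [h1, e1, zero_add, e2]
  rw [h2]
  ring

noncomputable def Qsum (t : ℕ) (x : ℝ) : ℝ :=
  ∑ j ∈ range t, ((t : ℝ) - j) * x ^ j / (Nat.factorial j : ℝ)

lemma natfact1 (t : ℕ) : ∀ j : ℕ,
    (j + 1) * (Nat.factorial (t + 1) * Nat.factorial j) ≤ Nat.factorial (j + (t + 1))
  | 0 => by simp
  | (j + 1) => by
      have ih := natfact1 t j
      have e : j + 1 + (t + 1) = (j + (t + 1)) + 1 := by omega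
      have e2 : j + (t + 1) + 1 = j + t + 2 := by omega
      rw [e, Nat.factorial_succ, e2]
      calc (j + 1 + 1) * (Nat.factorial (t + 1) * Nat.factorial (j + 1))
          = ((j + 2) * (j + 1)) * (Nat.factorial (t + 1) * Nat.factorial j) := by
            rw [Nat.factorial_succ j]; ring
        _ ≤ ((j + t + 2) * (j + 1)) * (Nat.factorial (t + 1) * Nat.factorial j) :=
            Nat.mul_le_mul_right _ (Nat.mul_le_mul_right _ (by omega))
        _ = (j + t + 2) * ((j + 1) * (Nat.factorial (t + 1) * Nat.factorial j)) := by ring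
        _ ≤ (j + t + 2) * Nat.factorial (j + (t + 1)) := Nat.mul_le_mul_left _ ih

lemma natfact2 (t : ℕ) (ht : 2 ≤ t) : 4 * ((t : ℝ) - 1) ≤ (Nat.factorial (t + 1) : ℝ) := by
  induction t, ht using Nat.le_induction with
  | base => norm_num [Nat.factorial]
  | succ t ht ih =>
      have h1 : (Nat.factorial (t + 2) : ℝ) = ((t : ℝ) + 2) * (Nat.factorial (t + 1) : ℝ) := by
        rw [Nat.factorial_succ]; push_cast; ring
      have ht' : (2 : ℝ) ≤ t := by exact_mod_cast ht
      rw [h1]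
      push_cast
      nlinarith

lemma S_bound (t : ℕ) (ht : 2 ≤ t) (lam : ℝ) (hl : 0 ≤ lam) :
    lam - t + Real.exp (-lam) * Qsum t lam ≤ lam ^ 2 / (4 * ((t : ℝ) - 1)) := by
  have ht' : (2 : ℝ) ≤ (t : ℝ) := by exact_mod_cast ht
  set f : ℕ → ℝ := fun i => ((i : ℝ) - t) * lam ^ i / (Nat.factorial i : ℝ) with hfdef
  have hfs : Summable f := by
    refine ((sum1 lam).sub ((sum_fact lam).mul_left (t : ℝ))).congr fun i => ?_
    simp only [hfdef]
    ring
  have tsum_f : ∑' i, f i = (lam - t) * Real.exp lam := by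
    have hc : ∀ i : ℕ, f i = (i : ℝ) * lam ^ i / (Nat.factorial i : ℝ)
        - (t : ℝ) * (lam ^ i / (Nat.factorial i : ℝ)) := fun i => by
      simp only [hfdef]; ring
    rw [tsum_congr hc, Summable.tsum_sub (sum1 lam) ((sum_fact lam).mul_left _),
      tsumE1, tsum_mul_left, exp_tsum]
    ring
  have hhs : Summable (fun i : ℕ => if t + 1 ≤ i then f i else 0) := summable_ite_of f hfs _
  have hrange : ∑ i ∈ range (t + 1), f i = - Qsum t lam := by
    rw [Finset.sum_range_succ]
    have hft : f t = 0 := by simp [hfdef]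
    rw [hft, add_zero, Qsum, ← Finset.sum_neg_distrib]
    exact Finset.sum_congr rfl fun j _ => by simp only [hfdef]; ring
  have tsum_h : ∑' i, (if t + 1 ≤ i then f i else 0) = (lam - t) * Real.exp lam + Qsum t lam := by
    rw [tsum_ite_of f hfs (t + 1), tsum_f, hrange]
    ring
  -- main bound on the tail sum
  have key : ∑' i, (if t + 1 ≤ i then f i else 0) ≤ lam ^ 2 / (4 * ((t : ℝ) - 1)) * Real.exp lam := by
    rcases le_total lam 1 with hlam1 | hlam1
    · -- small lam : compare with `lam^(t+1)/(t+1)! * exp lam`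
      have hshift : ∑' i, (if t + 1 ≤ i then f i else 0) = ∑' i, f (i + (t + 1)) := by
        have h2 := (Summable.sum_add_tsum_nat_add (t + 1) hfs).symm
        rw [tsum_ite_of f hfs (t + 1), h2, hrange]
        ring
      rw [hshift]
      have hterm : ∀ i : ℕ, f (i + (t + 1))
          ≤ lam ^ (t + 1) / (Nat.factorial (t + 1) : ℝ) * (lam ^ i / (Nat.factorial i : ℝ)) := by
        intro i
        have hp : (0 : ℝ) ≤ lam ^ i * lam ^ (t + 1) := by positivity
        have e1 : f (i + (t + 1)) = (lam ^ i * lam ^ (t + 1))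
            * (((i : ℝ) + 1) / (Nat.factorial (i + (t + 1)) : ℝ)) := by
          simp only [hfdef]
          rw [pow_add]
          push_cast
          ring
        have e2 : lam ^ (t + 1) / (Nat.factorial (t + 1) : ℝ) * (lam ^ i / (Nat.factorial i : ℝ))
            = (lam ^ i * lam ^ (t + 1))
              * (1 / ((Nat.factorial (t + 1) : ℝ) * (Nat.factorial i : ℝ))) := by
          ring
        have hco : ((i : ℝ) + 1) / (Nat.factorial (i + (t + 1)) : ℝ)
            ≤ 1 / ((Nat.factorial (t + 1) : ℝ) * (Nat.factorial i : ℝ)) := by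
          rw [div_le_div_iff₀ (by positivity) (by positivity), one_mul]
          exact_mod_cast natfact1 t i
        rw [e1, e2]
        exact mul_le_mul_of_nonneg_left hco hp
      have hsumL : Summable (fun i : ℕ => f (i + (t + 1))) := (summable_nat_add_iff (t + 1)).2 hfs
      have hsumR : Summable (fun i : ℕ =>
          lam ^ (t + 1) / (Nat.factorial (t + 1) : ℝ) * (lam ^ i / (Nat.factorial i : ℝ))) :=
        (sum_fact lam).mul_left _
      have h3 := Summable.tsum_le_tsum hterm hsumL hsumR
      rw [tsum_mul_left, exp_tsum] at h3
      refine h3.trans ?_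
      have h4 : lam ^ (t + 1) ≤ lam ^ 2 := pow_le_pow_of_le_one hl hlam1 (by omega)
      have h5 : lam ^ (t + 1) / (Nat.factorial (t + 1) : ℝ) ≤ lam ^ 2 / (4 * ((t : ℝ) - 1)) :=
        div_le_div₀ (by positivity) h4 (by linarith) (natfact2 t ht)
      exact mul_le_mul_of_nonneg_right h5 (Real.exp_nonneg lam)
    · -- large lam : compare with `(i-1)^2/(4(t-1)) * lam^i/i!`
      set g : ℕ → ℝ := fun i => ((i : ℝ) - 1) ^ 2 * lam ^ i / (Nat.factorial i : ℝ)
        / (4 * ((t : ℝ) - 1)) with hgdef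
      have hggs : Summable (fun i : ℕ => ((i : ℝ) - 1) ^ 2 * lam ^ i / (Nat.factorial i : ℝ)) := by
        refine (((sum2 lam).sub (sum1 lam)).add (sum_fact lam)).congr fun i => ?_
        ring
      have hgs : Summable g := hggs.div_const _
      have hterm : ∀ i : ℕ, (if t + 1 ≤ i then f i else 0) ≤ g i := by
        intro i
        by_cases hi : t + 1 ≤ i
        · rw [if_pos hi]
          have hi' : (t : ℝ) + 1 ≤ (i : ℝ) := by exact_mod_cast hi
          have hp : (0 : ℝ) ≤ lam ^ i / (Nat.factorial i : ℝ) := by positivity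
          have e1 : f i = ((i : ℝ) - t) * (lam ^ i / (Nat.factorial i : ℝ)) := by
            simp only [hfdef]; ring
          have e2 : g i = (((i : ℝ) - 1) ^ 2 / (4 * ((t : ℝ) - 1)))
              * (lam ^ i / (Nat.factorial i : ℝ)) := by
            simp only [hgdef]; ring
          have hco : (i : ℝ) - t ≤ ((i : ℝ) - 1) ^ 2 / (4 * ((t : ℝ) - 1)) := by
            rw [le_div_iff₀ (by linarith)]
            nlinarith [sq_nonneg ((i : ℝ) - (2 * (t : ℝ) - 1))]
          rw [e1, e2]
          exact mul_le_mul_of_nonneg_right hco hp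
        · rw [if_neg hi]
          simp only [hgdef]
          apply div_nonneg _ (by linarith)
          positivity
      have h3 := Summable.tsum_le_tsum hterm hhs hgs
      have h4 : ∑' i, g i = (lam ^ 2 - lam + 1) * Real.exp lam / (4 * ((t : ℝ) - 1)) := by
        simp only [hgdef]
        rw [tsum_div_const]
        congr 1
        have hc : ∀ i : ℕ, ((i : ℝ) - 1) ^ 2 * lam ^ i / (Nat.factorial i : ℝ)
            = ((i : ℝ) * ((i : ℝ) - 1) * lam ^ i / (Nat.factorial i : ℝ)
                - (i : ℝ) * lam ^ i / (Nat.factorial i : ℝ))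
              + lam ^ i / (Nat.factorial i : ℝ) := fun i => by ring
        rw [tsum_congr hc, Summable.tsum_add ((sum2 lam).sub (sum1 lam)) (sum_fact lam),
          Summable.tsum_sub (sum2 lam) (sum1 lam), tsumE2, tsumE1, exp_tsum]
        ring
      rw [h4] at h3
      refine h3.trans ?_
      have h5 : (lam ^ 2 - lam + 1) * Real.exp lam ≤ lam ^ 2 * Real.exp lam :=
        mul_le_mul_of_nonneg_right (by nlinarith) (Real.exp_nonneg lam)
      have e3 : lam ^ 2 / (4 * ((t : ℝ) - 1)) * Real.exp lam
          = lam ^ 2 * Real.exp lam / (4 * ((t : ℝ) - 1)) := by ring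
      rw [e3]
      exact (div_le_div_iff_of_pos_right (by linarith)).mpr h5
  -- combine
  have hexp : Real.exp (-lam) * Real.exp lam = 1 := by
    rw [← Real.exp_add]; simp
  have hid : lam - t + Real.exp (-lam) * Qsum t lam
      = Real.exp (-lam) * ∑' i, (if t + 1 ≤ i then f i else 0) := by
    rw [tsum_h]
    linear_combination ((t : ℝ) - lam) * hexp
  rw [hid]
  have h6 := mul_le_mul_of_nonneg_left key (Real.exp_nonneg (-lam))
  have e4 : Real.exp (-lam) * (lam ^ 2 / (4 * ((t : ℝ) - 1)) * Real.exp lam)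
      = lam ^ 2 / (4 * ((t : ℝ) - 1)) := by
    linear_combination (lam ^ 2 / (4 * ((t : ℝ) - 1))) * hexp
  rw [e4] at h6
  exact h6

lemma Qsum_nonneg (t : ℕ) (x : ℝ) (hx : 0 ≤ x) : 0 ≤ Qsum t x := by
  refine Finset.sum_nonneg fun j hj => ?_
  have hj' : (j : ℝ) ≤ t := by exact_mod_cast (Finset.mem_range.mp hj).le
  apply div_nonneg (mul_nonneg (by linarith) (pow_nonneg hx j))
  positivity

lemma Qsum_zero (t : ℕ) (ht : 1 ≤ t) : Qsum t 0 = t := by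
  rw [Qsum, Finset.sum_eq_single_of_mem 0 (Finset.mem_range.mpr (by omega))]
  · simp
  · intro j _ hj
    rw [zero_pow hj, mul_zero, zero_div]

lemma Q_as_double (t : ℕ) (x : ℝ) :
    ∑ i ∈ range t, ∑ j ∈ range (i + 1), x ^ j / (Nat.factorial j : ℝ) = Qsum t x := by
  induction t with
  | zero => simp [Qsum]
  | succ t ih =>
      rw [Finset.sum_range_succ, ih]
      have h1 : Qsum (t + 1) x
          = ∑ j ∈ range (t + 1), (((t : ℝ) - j) * x ^ j / (Nat.factorial j : ℝ)
              + x ^ j / (Nat.factorial j : ℝ)) := by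
        rw [Qsum]
        refine Finset.sum_congr rfl fun j _ => ?_
        push_cast
        ring
      rw [h1, Finset.sum_add_distrib, Finset.sum_range_succ
        (f := fun j => ((t : ℝ) - j) * x ^ j / (Nat.factorial j : ℝ))]
      simp [Qsum]

lemma hasDerivAt_R (n : ℕ) (z : ℝ) :
    HasDerivAt (fun z : ℝ => Real.exp (-z) * ∑ j ∈ range (n + 1), z ^ j / (Nat.factorial j : ℝ))
      (-(Real.exp (-z) * z ^ n / (Nat.factorial n : ℝ))) z := by
  induction n with
  | zero =>
      have h : (fun z : ℝ => Real.exp (-z) * ∑ j ∈ range 1, z ^ j / (Nat.factorial j : ℝ))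
          = fun z : ℝ => Real.exp (-z) := by
        funext z; simp
      rw [h]
      have := (Real.hasDerivAt_exp (-z)).comp z (hasDerivAt_neg z)
      refine this.congr_deriv ?_
      simp
  | succ n ih =>
      have h : (fun z : ℝ => Real.exp (-z) * ∑ j ∈ range (n + 2), z ^ j / (Nat.factorial j : ℝ))
          = fun z : ℝ => (Real.exp (-z) * ∑ j ∈ range (n + 1), z ^ j / (Nat.factorial j : ℝ))
            + Real.exp (-z) * (z ^ (n + 1) / (Nat.factorial (n + 1) : ℝ)) := by
        funext z
        rw [Finset.sum_range_succ, mul_add]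
      rw [h]
      have hexp : HasDerivAt (fun z : ℝ => Real.exp (-z)) (-Real.exp (-z)) z := by
        have := (Real.hasDerivAt_exp (-z)).comp z (hasDerivAt_neg z)
        refine this.congr_deriv ?_
        simp
      have hpow : HasDerivAt (fun z : ℝ => z ^ (n + 1) / (Nat.factorial (n + 1) : ℝ))
          (((n : ℝ) + 1) * z ^ n / (Nat.factorial (n + 1) : ℝ)) z := by
        have := (hasDerivAt_pow (n + 1) z).div_const ((Nat.factorial (n + 1) : ℝ))
        refine this.congr_deriv ?_
        push_cast
        ring
      have := ih.add (hexp.mul hpow)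
      refine this.congr_deriv ?_
      have hn : (Nat.factorial n : ℝ) ≠ 0 := Nat.cast_ne_zero.mpr (Nat.factorial_ne_zero n)
      have hn1 : (Nat.factorial (n + 1) : ℝ) = ((n : ℝ) + 1) * (Nat.factorial n : ℝ) := by
        rw [Nat.factorial_succ]; push_cast; ring
      rw [hn1]
      field_simp
      ring

lemma hasDerivAt_expQ (t : ℕ) (z : ℝ) :
    HasDerivAt (fun z : ℝ => Real.exp (-z) * Qsum t z)
      (-(Real.exp (-z) * ∑ j ∈ range t, z ^ j / (Nat.factorial j : ℝ))) z := by
  have h : (fun z : ℝ => Real.exp (-z) * Qsum t z)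
      = fun z : ℝ => ∑ i ∈ range t,
          Real.exp (-z) * ∑ j ∈ range (i + 1), z ^ j / (Nat.factorial j : ℝ) := by
    funext z
    rw [← Finset.mul_sum, Q_as_double]
  rw [h]
  have := HasDerivAt.fun_sum (fun i (_ : i ∈ range t) => hasDerivAt_R i z)
  refine this.congr_deriv ?_
  rw [Finset.mul_sum, ← Finset.sum_neg_distrib]
  exact Finset.sum_congr rfl fun i _ => by ring

lemma phi_eq (z : ℝ) (k : ℕ) :
    phi z k = 1 - Real.exp (-z) * ∑ j ∈ range (k + 1), z ^ j / (Nat.factorial j : ℝ) := by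
  have hf : Summable (fun i : ℕ => z ^ i / (Nat.factorial i : ℝ) * Real.exp (-z)) :=
    (sum_fact z).mul_right _
  rw [phi, tsum_ite_of _ hf, tsum_mul_right, exp_tsum, ← Real.exp_add]
  simp only [add_neg_cancel, Real.exp_zero]
  rw [← Finset.sum_mul]
  ring

lemma U_eq (t : ℕ) (ht : 1 ≤ t) (lam ρ : ℝ) :
    U t lam ρ = lam ^ 2 / 2 - ρ * (lam - t + Real.exp (-lam) * Qsum t lam) := by
  have hk : t - 1 + 1 = t := Nat.sub_add_cancel ht
  have hfun : (fun z : ℝ => z - ρ * phi z (t - 1))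
      = fun z : ℝ => z - ρ * (1 - Real.exp (-z) * ∑ j ∈ range t, z ^ j / (Nat.factorial j : ℝ)) := by
    funext z; rw [phi_eq, hk]
  set F : ℝ → ℝ := fun z => z ^ 2 / 2 - ρ * (z + Real.exp (-z) * Qsum t z - t) with hF
  have hderiv : ∀ z : ℝ, HasDerivAt F
      (z - ρ * (1 - Real.exp (-z) * ∑ j ∈ range t, z ^ j / (Nat.factorial j : ℝ))) z := by
    intro z
    have h1 : HasDerivAt (fun z : ℝ => z ^ 2 / 2) z z := by
      have := (hasDerivAt_pow 2 z).div_const 2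
      refine this.congr_deriv ?_; push_cast; ring
    have h2 := hasDerivAt_expQ t z
    have h3 : HasDerivAt (fun z : ℝ => z + Real.exp (-z) * Qsum t z - (t : ℝ))
        (1 + -(Real.exp (-z) * ∑ j ∈ range t, z ^ j / (Nat.factorial j : ℝ))) z :=
      ((hasDerivAt_id z).add h2).sub_const _
    have := h1.sub (h3.const_mul ρ)
    refine this.congr_deriv ?_
    ring

  have hcont : Continuous (fun z : ℝ =>
      z - ρ * (1 - Real.exp (-z) * ∑ j ∈ range t, z ^ j / (Nat.factorial j : ℝ))) := by
    fun_prop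
  rw [U, hfun,
    intervalIntegral.integral_eq_sub_of_hasDerivAt (fun x _ => hderiv x)
      (hcont.intervalIntegrable _ _)]
  have h0 : F 0 = 0 := by simp [hF, Qsum_zero t ht]
  rw [h0, sub_zero, hF]
  ring

/-- for every integer `t ≥ 2`, `ρ̂_t** ≥ 2t−2`. -/
theorem stmt9 (t : ℕ) (ht : 2 ≤ t) :
    2 * (t : ℝ) - 2 ≤ rhoHatStarStar t := by
  have ht1 : 1 ≤ t := by omega
  have ht' : (2 : ℝ) ≤ (t : ℝ) := by exact_mod_cast ht
  have hmem : (2 * (t : ℝ) - 2) ∈ {ρ : ℝ | 0 ≤ ρ ∧ ∀ lam : ℝ, 0 ≤ lam → 0 ≤ U t lam ρ} := by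
    constructor
    · linarith
    · intro lam hl
      rw [U_eq t ht1]
      have hb := S_bound t ht lam hl
      have h4 : (0 : ℝ) < 4 * ((t : ℝ) - 1) := by linarith
      have h4' : (4 : ℝ) * ((t : ℝ) - 1) ≠ 0 := ne_of_gt h4
      have hmul : (2 * (t : ℝ) - 2) * (lam - t + Real.exp (-lam) * Qsum t lam)
          ≤ (2 * (t : ℝ) - 2) * (lam ^ 2 / (4 * ((t : ℝ) - 1))) :=
        mul_le_mul_of_nonneg_left hb (by linarith)
      have he : (2 * (t : ℝ) - 2) * (lam ^ 2 / (4 * ((t : ℝ) - 1))) = lam ^ 2 / 2 := by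
        have h1' : (t : ℝ) - 1 ≠ 0 := by linarith
        field_simp
        ring
      linarith
  have hbdd : BddAbove {ρ : ℝ | 0 ≤ ρ ∧ ∀ lam : ℝ, 0 ≤ lam → 0 ≤ U t lam ρ} := by
    refine ⟨((t : ℝ) + 1) ^ 2 / 2, fun ρ hρ => ?_⟩
    obtain ⟨hρ0, hρU⟩ := hρ
    have h1 := hρU ((t : ℝ) + 1) (by positivity)
    rw [U_eq t ht1] at h1
    have hQ : 0 ≤ Qsum t ((t : ℝ) + 1) := Qsum_nonneg t _ (by positivity)
    have hX : (1 : ℝ) ≤ ((t : ℝ) + 1) - t + Real.exp (-((t : ℝ) + 1)) * Qsum t ((t : ℝ) + 1) := by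
      have := mul_nonneg (Real.exp_nonneg (-((t : ℝ) + 1))) hQ
      linarith
    nlinarith
  exact le_csSup hbdd hmem
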